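/- Let p, q ≥ 1, let W be a real symmetric positive definite pq×pq matrix with smallest eigenvalue λ_{W,min} and largest eigenvalue λ_{W,max}, let P = [P_Θ P_Ψ] with P_Θ = Σ_{i=1}^q I_p⊗e_{q,i}⊗I_p⊗e_{q,i} and P_Ψ = Σ_{j=1}^p e_{p,j}⊗I_q⊗e_{p,j}⊗I_q, and let H = P^T(W⊗W)P. Then for every unit vector u ∈ ℝ^{p²+q²} that is orthogonal to the null space of H: min{p,q}·λ_{W,min}² ≤ u^T H u ≤ (p+q)·λ_{W,max}². In particular, on the orthogonal complement of its null space, the smallest eigenvalue of H is at least min{p,q}·λ_{W,min}² and its largest eigenvalue is at most (p+q)·λ_{W,max}². -/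

import Mathlib

open Matrix
open scoped Kronecker

namespace EiGLasso

/-- The Kronecker sum `Θ ⊕ Ψ = Θ ⊗ I_q + I_p ⊗ Ψ`. -/
def kronSum {p q : ℕ} (A : Matrix (Fin p) (Fin p) ℝ) (B : Matrix (Fin q) (Fin q) ℝ) :
    Matrix (Fin p × Fin q) (Fin p × Fin q) ℝ :=
  A ⊗ₖ (1 : Matrix (Fin q) (Fin q) ℝ) + (1 : Matrix (Fin p) (Fin p) ℝ) ⊗ₖ B

/-- The `pq × p` selection matrix `I_p ⊗ e_{q,i}`, where `e_{q,i}` is the `i`-th one-hot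
vector in `ℝ^q`.  Row `(j', i')` (i.e. row `(j'-1)q + i'`), column `j`. -/
def selTheta (p q : ℕ) (i : Fin q) : Matrix (Fin p × Fin q) (Fin p) ℝ :=
  Matrix.of fun x j => if x = (j, i) then (1 : ℝ) else 0

/-- The `pq × q` selection matrix `e_{p,j} ⊗ I_q`. -/
def selPsi (p q : ℕ) (j : Fin p) : Matrix (Fin p × Fin q) (Fin q) ℝ :=
  Matrix.of fun x i => if x = (j, i) then (1 : ℝ) else 0

/-- `P_Θ = ∑_{i=1}^q I_p ⊗ e_{q,i} ⊗ I_p ⊗ e_{q,i}`, a `p²q² × p²` matrix. -/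
def Ptheta (p q : ℕ) : Matrix ((Fin p × Fin q) × (Fin p × Fin q)) (Fin p × Fin p) ℝ :=
  ∑ i : Fin q, (selTheta p q i) ⊗ₖ (selTheta p q i)

/-- `P_Ψ = ∑_{j=1}^p e_{p,j} ⊗ I_q ⊗ e_{p,j} ⊗ I_q`, a `p²q² × q²` matrix. -/
def Ppsi (p q : ℕ) : Matrix ((Fin p × Fin q) × (Fin p × Fin q)) (Fin q × Fin q) ℝ :=
  ∑ j : Fin p, (selPsi p q j) ⊗ₖ (selPsi p q j)

/-- Column-stacking vectorization: `vec(A)` at index `(j, i)` (i.e. `(j-1)m + i`) is `A i j`. -/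
def vec {m n : Type*} (A : Matrix m n ℝ) : n × m → ℝ := fun x => A x.2 x.1

section Aux
set_option linter.unusedSectionVars false
variable {m n : Type*} [Fintype m] [Fintype n] [DecidableEq m] [DecidableEq n]

lemma posSemidef_smul' {A : Matrix m m ℝ} (hA : A.PosSemidef) {c : ℝ} (hc : 0 ≤ c) :
    (c • A).PosSemidef := by
  refine .of_dotProduct_mulVec_nonneg ?_ (fun x => ?_)
  · show (c • A)ᴴ = c • A
    rw [conjTranspose_smul, hA.1.eq, star_trivial]
  · rw [smul_mulVec, dotProduct_smul, smul_eq_mul]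
    exact mul_nonneg hc (hA.dotProduct_mulVec_nonneg x)

lemma posSemidef_kron {A : Matrix m m ℝ} {B : Matrix n n ℝ}
    (hA : A.PosSemidef) (hB : B.PosSemidef) : (A ⊗ₖ B).PosSemidef := by
  exact hA.kronecker hB

lemma subk {l o : Type*} (A B : Matrix m n ℝ) (C : Matrix l o ℝ) :
    (A - B) ⊗ₖ C = A ⊗ₖ C - B ⊗ₖ C := by
  ext x y; simp [kroneckerMap_apply, sub_mul]

lemma ksub {l o : Type*} (C : Matrix l o ℝ) (A B : Matrix m n ℝ) :
    C ⊗ₖ (A - B) = C ⊗ₖ A - C ⊗ₖ B := by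
  ext x y; simp [kroneckerMap_apply, mul_sub]

lemma loewner {W : Matrix n n ℝ} (hH : W.IsHermitian) {c : ℝ}
    (hc : ∀ i, c ≤ hH.eigenvalues i) : (W - c • 1).PosSemidef := by
  have key : W - c • 1
      = (hH.eigenvectorUnitary : Matrix n n ℝ) * diagonal (fun i => hH.eigenvalues i - c)
        * ((hH.eigenvectorUnitary : Matrix n n ℝ))ᴴ := by
    have hu : (hH.eigenvectorUnitary : Matrix n n ℝ)
        * ((hH.eigenvectorUnitary : Matrix n n ℝ))ᴴ = 1 := by
      simpa [Matrix.star_eq_conjTranspose] using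
        Matrix.mem_unitaryGroup_iff.mp hH.eigenvectorUnitary.2
    have hd : diagonal (fun i => hH.eigenvalues i - c)
        = diagonal (RCLike.ofReal ∘ hH.eigenvalues) - c • (1 : Matrix n n ℝ) := by
      rw [Matrix.smul_one_eq_diagonal, diagonal_sub]
      rfl
    rw [hd, Matrix.mul_sub, Matrix.sub_mul, Matrix.mul_smul, Matrix.smul_mul, mul_one, hu,
      ← Matrix.star_eq_conjTranspose, ← Unitary.conjStarAlgAut_apply (S := ℝ), ← hH.spectral_theorem]
  rw [key]
  exact (Matrix.PosSemidef.diagonal (fun i => sub_nonneg.mpr (hc i))).mul_mul_conjTranspose_same _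

lemma loewner' {W : Matrix n n ℝ} (hH : W.IsHermitian) {c : ℝ}
    (hc : ∀ i, hH.eigenvalues i ≤ c) : (c • 1 - W).PosSemidef := by
  have key : c • 1 - W
      = (hH.eigenvectorUnitary : Matrix n n ℝ) * diagonal (fun i => c - hH.eigenvalues i)
        * ((hH.eigenvectorUnitary : Matrix n n ℝ))ᴴ := by
    have hu : (hH.eigenvectorUnitary : Matrix n n ℝ)
        * ((hH.eigenvectorUnitary : Matrix n n ℝ))ᴴ = 1 := by
      simpa [Matrix.star_eq_conjTranspose] using
        Matrix.mem_unitaryGroup_iff.mp hH.eigenvectorUnitary.2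
    have hd : diagonal (fun i => c - hH.eigenvalues i)
        = c • (1 : Matrix n n ℝ) - diagonal (RCLike.ofReal ∘ hH.eigenvalues) := by
      rw [Matrix.smul_one_eq_diagonal, diagonal_sub]
      rfl
    rw [hd, Matrix.mul_sub, Matrix.sub_mul, Matrix.mul_smul, Matrix.smul_mul, mul_one, hu,
      ← Matrix.star_eq_conjTranspose, ← Unitary.conjStarAlgAut_apply (S := ℝ), ← hH.spectral_theorem]
  rw [key]
  exact (Matrix.PosSemidef.diagonal (fun i => sub_nonneg.mpr (hc i))).mul_mul_conjTranspose_same _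

lemma kron_quad {N : Type*} [Fintype N] [DecidableEq N] {W : Matrix N N ℝ} (hW : W.PosDef)
    {lmin lmax : ℝ}
    (hmin : IsLeast {μ : ℝ | ∃ v : N → ℝ, v ≠ 0 ∧ W.mulVec v = μ • v} lmin)
    (hmax : IsGreatest {μ : ℝ | ∃ v : N → ℝ, v ≠ 0 ∧ W.mulVec v = μ • v} lmax)
    (w : N × N → ℝ) :
    (0 < lmin) ∧ lmin ^ 2 * (w ⬝ᵥ w) ≤ w ⬝ᵥ (W ⊗ₖ W) *ᵥ w ∧
      w ⬝ᵥ (W ⊗ₖ W) *ᵥ w ≤ lmax ^ 2 * (w ⬝ᵥ w) := by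
  have hH : W.IsHermitian := hW.1
  have mem : ∀ i, hH.eigenvalues i ∈ {μ : ℝ | ∃ v : N → ℝ, v ≠ 0 ∧ W.mulVec v = μ • v} := by
    intro i
    refine ⟨⇑(hH.eigenvectorBasis i), ?_, hH.mulVec_eigenvectorBasis i⟩
    intro h0
    have hb0 : hH.eigenvectorBasis i = 0 := by
      ext j; exact congrFun h0 j
    have h1 := hH.eigenvectorBasis.orthonormal.1 i
    rw [hb0] at h1
    simp at h1
  have hle : ∀ i, lmin ≤ hH.eigenvalues i := fun i => hmin.2 (mem i)
  have hge : ∀ i, hH.eigenvalues i ≤ lmax := fun i => hmax.2 (mem i)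
  have hminpos : 0 < lmin := by
    obtain ⟨v, hv0, hveq⟩ := hmin.1
    have h1 := hW.dotProduct_mulVec_pos hv0
    rw [hveq] at h1
    simp only [star_trivial, dotProduct_smul, smul_eq_mul] at h1
    have hs : 0 < v ⬝ᵥ v := by
      have := Matrix.dotProduct_star_self_pos_iff.mpr hv0
      simpa using this
    nlinarith
  have hmaxpos : 0 < lmax := lt_of_lt_of_le hminpos (hmax.2 hmin.1)
  have P1 : (W - lmin • 1).PosSemidef := loewner hH hle
  have P2 : (lmax • 1 - W).PosSemidef := loewner' hH hge
  have Wpsd : W.PosSemidef := hW.posSemidef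
  have onepsd : (1 : Matrix N N ℝ).PosSemidef := Matrix.PosSemidef.one
  have Mlo : ((W - lmin • 1) ⊗ₖ W
      + lmin • ((1 : Matrix N N ℝ) ⊗ₖ (W - lmin • 1))).PosSemidef :=
    (posSemidef_kron P1 Wpsd).add (posSemidef_smul' (posSemidef_kron onepsd P1) hminpos.le)
  have Mup : ((lmax • 1 - W) ⊗ₖ W
      + lmax • ((1 : Matrix N N ℝ) ⊗ₖ (lmax • 1 - W))).PosSemidef :=
    (posSemidef_kron P2 Wpsd).add (posSemidef_smul' (posSemidef_kron onepsd P2) hmaxpos.le)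
  have idlo : (W - lmin • 1) ⊗ₖ W + lmin • ((1 : Matrix N N ℝ) ⊗ₖ (W - lmin • 1))
      = W ⊗ₖ W - lmin ^ 2 • 1 := by
    rw [subk, ksub, Matrix.smul_kronecker, Matrix.kronecker_smul, Matrix.one_kronecker_one]
    rw [smul_sub, smul_smul, ← pow_two]
    abel
  have idup : (lmax • 1 - W) ⊗ₖ W + lmax • ((1 : Matrix N N ℝ) ⊗ₖ (lmax • 1 - W))
      = lmax ^ 2 • 1 - W ⊗ₖ W := by
    rw [subk, ksub, Matrix.smul_kronecker, Matrix.kronecker_smul, Matrix.one_kronecker_one]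
    rw [smul_sub, smul_smul, ← pow_two]
    abel
  rw [idlo] at Mlo
  rw [idup] at Mup
  have hlo := Mlo.dotProduct_mulVec_nonneg w
  have hup := Mup.dotProduct_mulVec_nonneg w
  simp only [star_trivial, Matrix.sub_mulVec, dotProduct_sub, Matrix.smul_mulVec,
    Matrix.one_mulVec, dotProduct_smul, smul_eq_mul] at hlo hup
  exact ⟨hminpos, by linarith, by linarith⟩

lemma ite_one_mul_ite_one (P Q : Prop) [Decidable P] [Decidable Q] :
    (if P then (1:ℝ) else 0) * (if P' : Q then (1:ℝ) else 0) = if P ∧ Q then 1 else 0 := by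
  by_cases hP : P <;> by_cases hQ : Q <;> simp [hP, hQ]

lemma ite_mul_ite_and (P Q : Prop) [Decidable P] [Decidable Q] (x y : ℝ) :
    (if P then x else 0) * (if Q then y else 0) = if P ∧ Q then x * y else 0 := by
  by_cases hP : P <;> by_cases hQ : Q <;> simp [hP, hQ]

end Aux

lemma Ptheta_mulVec (p q : ℕ) (av : Fin p × Fin p → ℝ) (x : (Fin p × Fin q) × (Fin p × Fin q)) :
    (Ptheta p q *ᵥ av) x = if x.1.2 = x.2.2 then av (x.1.1, x.2.1) else 0 := by
  have happ : ∀ j : Fin p × Fin p, Ptheta p q x j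
      = if x.1 = (j.1, x.2.2) ∧ x.2 = (j.2, x.2.2) then 1 else 0 := by
    intro j
    simp only [Ptheta, Matrix.sum_apply, kroneckerMap_apply, selTheta, Matrix.of_apply]
    rw [Finset.sum_eq_single x.2.2]
    · exact ite_one_mul_ite_one _ _
    · intro i _ hi
      by_cases h2 : x.2 = (j.2, i)
      · have : x.2.2 = i := by rw [h2]
        exact absurd this.symm hi
      · simp [h2]
    · exact fun h => absurd (Finset.mem_univ _) h
  simp only [Matrix.mulVec, dotProduct, happ, ite_mul, one_mul, zero_mul]
  rw [Finset.sum_eq_single (x.1.1, x.2.1)]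
  · by_cases h : x.1.2 = x.2.2 <;> simp [Prod.ext_iff, h]
  · intro j _ hj
    by_cases hc : x.1 = (j.1, x.2.2) ∧ x.2 = (j.2, x.2.2)
    · exfalso
      apply hj
      have h1 : j.1 = x.1.1 := by rw [hc.1]
      have h2 : j.2 = x.2.1 := by rw [hc.2]
      exact Prod.ext h1 h2
    · simp [hc]
  · exact fun h => absurd (Finset.mem_univ _) h

lemma Ppsi_mulVec (p q : ℕ) (bv : Fin q × Fin q → ℝ) (x : (Fin p × Fin q) × (Fin p × Fin q)) :
    (Ppsi p q *ᵥ bv) x = if x.1.1 = x.2.1 then bv (x.1.2, x.2.2) else 0 := by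
  have happ : ∀ i : Fin q × Fin q, Ppsi p q x i
      = if x.1 = (x.2.1, i.1) ∧ x.2 = (x.2.1, i.2) then 1 else 0 := by
    intro i
    simp only [Ppsi, Matrix.sum_apply, kroneckerMap_apply, selPsi, Matrix.of_apply]
    rw [Finset.sum_eq_single x.2.1]
    · exact ite_one_mul_ite_one _ _
    · intro j _ hj
      by_cases h2 : x.2 = (j, i.2)
      · have : x.2.1 = j := by rw [h2]
        exact absurd this.symm hj
      · simp [h2]
    · exact fun h => absurd (Finset.mem_univ _) h
  simp only [Matrix.mulVec, dotProduct, happ, ite_mul, one_mul, zero_mul]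
  rw [Finset.sum_eq_single (x.1.2, x.2.2)]
  · by_cases h : x.1.1 = x.2.1 <;> simp [Prod.ext_iff, h, eq_comm]
  · intro i _ hi
    by_cases hc : x.1 = (x.2.1, i.1) ∧ x.2 = (x.2.1, i.2)
    · exfalso
      apply hi
      have h1 : i.1 = x.1.2 := by rw [hc.1]
      have h2 : i.2 = x.2.2 := by rw [hc.2]
      exact Prod.ext h1 h2
    · simp [hc]
  · exact fun h => absurd (Finset.mem_univ _) h

theorem hessian_eigenvalue_bounds (p q : ℕ) (hp : 1 ≤ p) (hq : 1 ≤ q)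
    (W : Matrix (Fin p × Fin q) (Fin p × Fin q) ℝ) (hW : W.PosDef)
    (lmin lmax : ℝ)
    (hmin : IsLeast {μ : ℝ | ∃ v : (Fin p × Fin q) → ℝ, v ≠ 0 ∧ W.mulVec v = μ • v} lmin)
    (hmax : IsGreatest {μ : ℝ | ∃ v : (Fin p × Fin q) → ℝ, v ≠ 0 ∧ W.mulVec v = μ • v} lmax)
    (u : (Fin p × Fin p) ⊕ (Fin q × Fin q) → ℝ)
    (hu : u ⬝ᵥ u = 1)
    (horth : ∀ v : (Fin p × Fin p) ⊕ (Fin q × Fin q) → ℝ,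
      ((fromCols (Ptheta p q) (Ppsi p q))ᵀ * (W ⊗ₖ W)
          * fromCols (Ptheta p q) (Ppsi p q)).mulVec v = 0 → u ⬝ᵥ v = 0) :
    ((min p q : ℕ) : ℝ) * lmin ^ 2
        ≤ u ⬝ᵥ ((fromCols (Ptheta p q) (Ppsi p q))ᵀ * (W ⊗ₖ W)
            * fromCols (Ptheta p q) (Ppsi p q)).mulVec u ∧
      u ⬝ᵥ ((fromCols (Ptheta p q) (Ppsi p q))ᵀ * (W ⊗ₖ W)
            * fromCols (Ptheta p q) (Ppsi p q)).mulVec u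
        ≤ ((p : ℝ) + (q : ℝ)) * lmax ^ 2 := by
  classical
  set a : Fin p × Fin p → ℝ := fun j => u (Sum.inl j) with ha
  set b : Fin q × Fin q → ℝ := fun i => u (Sum.inr i) with hb
  have hu' : u = Sum.elim a b := by funext x; cases x <;> rfl
  set w : (Fin p × Fin q) × (Fin p × Fin q) → ℝ := fun x =>
    (if x.1.2 = x.2.2 then a (x.1.1, x.2.1) else 0)
      + (if x.1.1 = x.2.1 then b (x.1.2, x.2.2) else 0) with hwdef
  have hPu : (fromCols (Ptheta p q) (Ppsi p q)) *ᵥ u = w := by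
    rw [hu', fromCols_mulVec_sumElim]
    funext x
    simp only [Pi.add_apply, Ptheta_mulVec, Ppsi_mulVec, hwdef]
  have hquad : u ⬝ᵥ ((fromCols (Ptheta p q) (Ppsi p q))ᵀ * (W ⊗ₖ W)
      * fromCols (Ptheta p q) (Ppsi p q)) *ᵥ u = w ⬝ᵥ (W ⊗ₖ W) *ᵥ w := by
    rw [← Matrix.mulVec_mulVec, ← Matrix.mulVec_mulVec, hPu,
      Matrix.dotProduct_mulVec, Matrix.vecMul_transpose, hPu]
  set ta := ∑ j : Fin p, a (j, j) with hta
  set tb := ∑ i : Fin q, b (i, i) with htb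
  set Sa := ∑ j1 : Fin p, ∑ j2 : Fin p, a (j1, j2) ^ 2 with hSa
  set Sb := ∑ i1 : Fin q, ∑ i2 : Fin q, b (i1, i2) ^ 2 with hSb
  have hSab : Sa + Sb = 1 := by
    rw [← hu, hu']
    simp [dotProduct, Fintype.sum_sum_type, Fintype.sum_prod_type, sq, hSa, hSb]
  have hSa0 : 0 ≤ Sa := Finset.sum_nonneg fun _ _ => Finset.sum_nonneg fun _ _ => sq_nonneg _
  have hSb0 : 0 ≤ Sb := Finset.sum_nonneg fun _ _ => Finset.sum_nonneg fun _ _ => sq_nonneg _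
  -- orthogonality to the kernel vector gives equal traces
  have htab : ta = tb := by
    set v0 : (Fin p × Fin p) ⊕ (Fin q × Fin q) → ℝ :=
      Sum.elim (fun j => if j.1 = j.2 then (1:ℝ) else 0)
        (fun i => if i.1 = i.2 then (-1:ℝ) else 0) with hv0
    have hPv0 : (fromCols (Ptheta p q) (Ppsi p q)) *ᵥ v0 = 0 := by
      rw [hv0, fromCols_mulVec_sumElim]
      funext x
      simp only [Pi.add_apply, Ptheta_mulVec, Ppsi_mulVec, Pi.zero_apply]
      by_cases h1 : x.1.2 = x.2.2 <;> by_cases h2 : x.1.1 = x.2.1 <;> simp [h1, h2]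
    have hHv0 : ((fromCols (Ptheta p q) (Ppsi p q))ᵀ * (W ⊗ₖ W)
        * fromCols (Ptheta p q) (Ppsi p q)) *ᵥ v0 = 0 := by
      rw [← Matrix.mulVec_mulVec, ← Matrix.mulVec_mulVec, hPv0, Matrix.mulVec_zero,
        Matrix.mulVec_zero]
    have h0 := horth v0 hHv0
    have hexp : u ⬝ᵥ v0 = ta - tb := by
      rw [hu', hv0]
      simp [dotProduct, Fintype.sum_sum_type, Fintype.sum_prod_type, mul_ite, mul_one,
        mul_zero, Finset.sum_ite_eq, hta, htb, sub_eq_add_neg, Finset.sum_neg_distrib]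
    rw [hexp] at h0
    linarith
  -- the squared norm of w
  have hww : w ⬝ᵥ w = (q : ℝ) * Sa + (p : ℝ) * Sb + 2 * (ta * tb) := by
    rw [hwdef, hSa, hSb, hta, htb]
    simp only [dotProduct, Fintype.sum_prod_type]
    simp only [add_mul, mul_add, ite_mul_ite_and, and_self]
    simp only [Finset.sum_add_distrib]
    simp only [Finset.sum_ite_eq, Finset.mem_univ, if_true, ite_and, Finset.sum_ite_irrel,
      Finset.sum_const_zero, Finset.sum_const, Finset.card_univ, Fintype.card_fin, smul_eq_mul]
    rw [← Finset.sum_mul_sum]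
    ring_nf
    have h1 : ∑ x : Fin p, (∑ y : Fin p, a (x, y) ^ 2) * (q:ℝ)
        = (q:ℝ) * ∑ x : Fin p, ∑ y : Fin p, a (x, y) ^ 2 := by
      rw [← Finset.sum_mul, mul_comm]
    have h2 : ∑ x : Fin q, ∑ y : Fin q, b (x, y) * b (x, y)
        = ∑ x : Fin q, ∑ y : Fin q, b (x, y) ^ 2 := by
      simp_rw [← sq]
    have h3 : ∑ x : Fin p, ∑ y : Fin q, b (y, y) * a (x, x)
        = (∑ i : Fin p, a (i, i)) * ∑ j : Fin q, b (j, j) := by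
      rw [Finset.sum_mul_sum]
      exact Finset.sum_congr rfl fun _ _ => Finset.sum_congr rfl fun _ _ => mul_comm _ _
    simp only [h1, h2, h3]
    ring
  -- Cauchy-Schwarz bounds on traces
  have hta2 : ta ^ 2 ≤ (p : ℝ) * Sa := by
    have h1 : ta ^ 2 ≤ (p : ℝ) * ∑ j : Fin p, a (j, j) ^ 2 := by
      have := sq_sum_le_card_mul_sum_sq (s := (Finset.univ : Finset (Fin p)))
        (f := fun j : Fin p => a (j, j))
      simpa using this
    have h2 : ∑ j : Fin p, a (j, j) ^ 2 ≤ Sa := by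
      refine Finset.sum_le_sum fun j1 _ => ?_
      exact Finset.single_le_sum (f := fun j2 => a (j1, j2) ^ 2)
        (fun _ _ => sq_nonneg _) (Finset.mem_univ j1)
    calc ta ^ 2 ≤ (p : ℝ) * ∑ j : Fin p, a (j, j) ^ 2 := h1
      _ ≤ (p : ℝ) * Sa := mul_le_mul_of_nonneg_left h2 (by positivity)
  have htb2 : tb ^ 2 ≤ (q : ℝ) * Sb := by
    have h1 : tb ^ 2 ≤ (q : ℝ) * ∑ i : Fin q, b (i, i) ^ 2 := by
      have := sq_sum_le_card_mul_sum_sq (s := (Finset.univ : Finset (Fin q)))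
        (f := fun i : Fin q => b (i, i))
      simpa using this
    have h2 : ∑ i : Fin q, b (i, i) ^ 2 ≤ Sb := by
      refine Finset.sum_le_sum fun i1 _ => ?_
      exact Finset.single_le_sum (f := fun i2 => b (i1, i2) ^ 2)
        (fun _ _ => sq_nonneg _) (Finset.mem_univ i1)
    calc tb ^ 2 ≤ (q : ℝ) * ∑ i : Fin q, b (i, i) ^ 2 := h1
      _ ≤ (q : ℝ) * Sb := mul_le_mul_of_nonneg_left h2 (by positivity)
  obtain ⟨hminpos, hlo, hup⟩ := kron_quad hW hmin hmax w
  have hmaxpos : 0 < lmax := lt_of_lt_of_le hminpos (hmax.2 hmin.1)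
  -- bounds on w ⬝ᵥ w
  have hmlep : ((min p q : ℕ) : ℝ) ≤ (p : ℝ) := by exact_mod_cast Nat.cast_le.mpr (min_le_left p q)
  have hmleq : ((min p q : ℕ) : ℝ) ≤ (q : ℝ) := by exact_mod_cast Nat.cast_le.mpr (min_le_right p q)
  have hwwlo : ((min p q : ℕ) : ℝ) ≤ w ⬝ᵥ w := by
    rw [hww, ← htab]
    have h1 : ((min p q : ℕ) : ℝ) * Sa ≤ (q : ℝ) * Sa := mul_le_mul_of_nonneg_right hmleq hSa0
    have h2 : ((min p q : ℕ) : ℝ) * Sb ≤ (p : ℝ) * Sb := mul_le_mul_of_nonneg_right hmlep hSb0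
    have h3 : 0 ≤ ta * ta := mul_self_nonneg ta
    have h4 : ((min p q : ℕ) : ℝ) = ((min p q : ℕ) : ℝ) * Sa + ((min p q : ℕ) : ℝ) * Sb := by
      rw [← mul_add, hSab, mul_one]
    linarith
  have hwwup : w ⬝ᵥ w ≤ (p : ℝ) + (q : ℝ) := by
    rw [hww, ← htab]
    have h2t : 2 * (ta * ta) ≤ (p : ℝ) * Sa + (q : ℝ) * Sb := by
      calc 2 * (ta * ta) = ta ^ 2 + tb ^ 2 := by rw [htab]; ring
        _ ≤ (p : ℝ) * Sa + (q : ℝ) * Sb := add_le_add hta2 htb2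
    have h4 : (q : ℝ) * Sa + (p : ℝ) * Sb + ((p : ℝ) * Sa + (q : ℝ) * Sb)
        = ((p : ℝ) + (q : ℝ)) * (Sa + Sb) := by ring
    have h5 : ((p : ℝ) + (q : ℝ)) * (Sa + Sb) = (p : ℝ) + (q : ℝ) := by rw [hSab, mul_one]
    linarith
  constructor
  · rw [hquad]
    calc ((min p q : ℕ) : ℝ) * lmin ^ 2 = lmin ^ 2 * ((min p q : ℕ) : ℝ) := by ring
      _ ≤ lmin ^ 2 * (w ⬝ᵥ w) := mul_le_mul_of_nonneg_left hwwlo (sq_nonneg lmin)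
      _ ≤ w ⬝ᵥ (W ⊗ₖ W) *ᵥ w := hlo
  · rw [hquad]
    calc w ⬝ᵥ (W ⊗ₖ W) *ᵥ w ≤ lmax ^ 2 * (w ⬝ᵥ w) := hup
      _ ≤ lmax ^ 2 * ((p : ℝ) + (q : ℝ)) := mul_le_mul_of_nonneg_left hwwup (sq_nonneg lmax)
      _ = ((p : ℝ) + (q : ℝ)) * lmax ^ 2 := by ring

end EiGLasso
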